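/- Let g ≥ 1, c > 0, and suppose distinct reals λ₁, …, λ_g with positive integer multiplicities m₁, …, m_g satisfy the Cartan formula ∑_{j≠i} m_j (c + λ_i λ_j)/(λ_i − λ_j) = 0 for all i, with λ_i = √c cot θ_i, θ_i = θ₁ + (i−1)π/g. If g is even, then the multiset {m₁, …, m_g} contains at most two distinct values. -/

import Mathlib

open Real Finset Complex
open Real Finset Complex

lemma aux_cot_period (x : ℝ) (t : ℤ) : Real.cot (x + t*π) = Real.cot x := by
  rw [Real.cot_eq_cos_div_sin, Real.cot_eq_cos_div_sin, Real.cos_add_int_mul_pi,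
    Real.sin_add_int_mul_pi]
  rw [mul_div_mul_left _ _ (zpow_ne_zero t (by norm_num : (-1:ℝ) ≠ 0))]

lemma aux_cot_pi_sub (x : ℝ) : Real.cot (π - x) = -Real.cot x := by
  rw [Real.cot_eq_cos_div_sin, Real.cot_eq_cos_div_sin, Real.cos_pi_sub, Real.sin_pi_sub,
    neg_div]

lemma aux_cot_neg (x : ℝ) : Real.cot (-x) = -Real.cot x := by
  rw [Real.cot_eq_cos_div_sin, Real.cot_eq_cos_div_sin, Real.cos_neg, Real.sin_neg, div_neg]

lemma aux_ratio (c : ℝ) (hc : 0 < c) (a b : ℝ) (hsa : Real.sin a ≠ 0) (hsb : Real.sin b ≠ 0)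
    (hsab : Real.sin (a - b) ≠ 0) :
    (c + (Real.sqrt c * Real.cot a) * (Real.sqrt c * Real.cot b))
        / (Real.sqrt c * Real.cot a - Real.sqrt c * Real.cot b)
      = -(Real.sqrt c * Real.cot (a - b)) := by
  have hcs : Real.sqrt c * Real.sqrt c = c := Real.mul_self_sqrt hc.le
  have hs0 : Real.sqrt c ≠ 0 := by positivity
  have hnum : c + (Real.sqrt c * Real.cot a) * (Real.sqrt c * Real.cot b)
      = c * Real.cos (a-b) / (Real.sin a * Real.sin b) := by
    rw [Real.cot_eq_cos_div_sin, Real.cot_eq_cos_div_sin, Real.cos_sub]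
    field_simp
    linear_combination Real.cos a * Real.cos b * hcs
  have hden : Real.sqrt c * Real.cot a - Real.sqrt c * Real.cot b
      = -(Real.sqrt c * Real.sin (a-b) / (Real.sin a * Real.sin b)) := by
    rw [Real.cot_eq_cos_div_sin, Real.cot_eq_cos_div_sin, Real.sin_sub]
    field_simp
    ring
  rw [hnum, hden, Real.cot_eq_cos_div_sin]
  rw [div_neg, div_div_div_comm]
  rw [div_self (mul_ne_zero hsa hsb), div_one]
  rw [neg_eq_iff_eq_neg, neg_neg]
  rw [div_eq_iff (by exact mul_ne_zero hs0 hsab)]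
  field_simp
  linear_combination (-Real.cos (a-b)) * hcs


-- geometric sum of nontrivial root of unity
lemma aux_geom (g : ℕ) (z : ℂ) (hzg : z ^ g = 1) (hz : z ≠ 1) :
    ∑ k ∈ Finset.range g, z ^ k = 0 := by
  rw [geom_sum_eq hz, hzg, sub_self, zero_div]

lemma aux_root_sum (g : ℕ) (hg : g ≠ 0) (s : ℕ) :
    ∑ k ∈ Finset.range g, (Complex.exp (2 * π * I / g)) ^ (s * k)
      = if g ∣ s then (g : ℂ) else 0 := by
  have hq := Complex.isPrimitiveRoot_exp g hg
  by_cases h : g ∣ s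
  · simp only [h, if_true]
    have : ∀ k ∈ Finset.range g, (Complex.exp (2 * π * I / g)) ^ (s * k) = 1 := by
      intro k _
      rw [pow_mul, (hq.pow_eq_one_iff_dvd s).2 h, one_pow]
    rw [Finset.sum_congr rfl this]
    simp
  · simp only [h, if_false]
    have h1 : (Complex.exp (2 * π * I / g)) ^ s ≠ 1 := by
      intro hcon; exact h ((hq.pow_eq_one_iff_dvd s).1 hcon)
    have h2 : ((Complex.exp (2 * π * I / g)) ^ s) ^ g = 1 := by
      rw [← pow_mul, mul_comm s g, pow_mul, hq.pow_eq_one, one_pow]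
    calc ∑ k ∈ Finset.range g, (Complex.exp (2 * π * I / g)) ^ (s * k)
        = ∑ k ∈ Finset.range g, ((Complex.exp (2 * π * I / g)) ^ s) ^ k := by
          simp [pow_mul]
      _ = 0 := aux_geom g _ h2 h1

lemma aux_pair (w : ℂ) (hw0 : w ≠ 0) (hw1 : w ≠ 1) :
    1/(w - 1) + 1/(w⁻¹ - 1) = -1 := by
  have h1 : w - 1 ≠ 0 := sub_ne_zero.2 hw1
  have h3 : (1 : ℂ) - w ≠ 0 := fun h => hw1 (by linear_combination -h)
  have h4 : w⁻¹ - 1 = (1 - w)/w := by field_simp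
  rw [h4, one_div_div]
  field_simp
  ring

lemma aux_inv_sum (g : ℕ) (hg : g ≠ 0) :
    ∑ k ∈ Finset.Ico 1 g, 1/((Complex.exp (2*π*I/g))^k - 1) = -((g:ℂ)-1)/2 := by
  set q : ℂ := Complex.exp (2*π*I/g) with hqdef
  have hq := Complex.isPrimitiveRoot_exp g hg
  have hq0 : q ≠ 0 := Complex.exp_ne_zero _
  have hne1 : ∀ k ∈ Finset.Ico 1 g, q^k ≠ 1 := by
    intro k hk
    rw [Finset.mem_Ico] at hk
    exact hq.pow_ne_one_of_pos_of_lt (by omega) hk.2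
  have hrev : ∀ k ∈ Finset.Ico 1 g, q^(g-k) = (q^k)⁻¹ := by
    intro k hk
    rw [Finset.mem_Ico] at hk
    rw [pow_sub₀ q hq0 hk.2.le, hq.pow_eq_one, one_mul]
  have hmaps : ∀ k ∈ Finset.Ico 1 g, g - k ∈ Finset.Ico 1 g := by
    intro k hk; rw [Finset.mem_Ico] at *; omega
  have hsum2 : (∑ k ∈ Finset.Ico 1 g, 1/(q^k - 1)) + (∑ k ∈ Finset.Ico 1 g, 1/(q^k - 1))
      = -((g:ℂ) - 1) := by
    nth_rewrite 2 [show (∑ k ∈ Finset.Ico 1 g, 1/(q^k - 1))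
        = ∑ k ∈ Finset.Ico 1 g, 1/(q^(g-k) - 1) from
      (Finset.sum_nbij' (fun k => g - k) (fun k => g - k) hmaps hmaps
        (by intro k hk; rw [Finset.mem_Ico] at hk; omega)
        (by intro k hk; rw [Finset.mem_Ico] at hk; omega)
        (by intro k hk; rfl)).symm]
    rw [← Finset.sum_add_distrib]
    have : ∀ k ∈ Finset.Ico 1 g, 1/(q^k - 1) + 1/(q^(g-k) - 1) = -1 := by
      intro k hk
      rw [hrev k hk]
      exact aux_pair _ (pow_ne_zero _ hq0) (hne1 k hk)
    rw [Finset.sum_congr rfl this, Finset.sum_const, Nat.card_Ico]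
    have h1 : 1 ≤ g := Nat.one_le_iff_ne_zero.2 hg
    rw [nsmul_eq_mul, Nat.cast_sub h1]
    push_cast
    ring
  linear_combination hsum2 / 2

lemma aux_term (w : ℂ) (hw1 : w ≠ 1) (ℓ : ℕ) :
    (w + 1)/(w - 1) * w^ℓ
      = (∑ s ∈ Finset.range (ℓ+1), w^s) + (∑ s ∈ Finset.range ℓ, w^s) + 2/(w - 1) := by
  have h1 : w - 1 ≠ 0 := sub_ne_zero.2 hw1
  field_simp
  linear_combination (-1 : ℂ) * geom_sum_mul w (ℓ+1) - geom_sum_mul w ℓ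

lemma aux_key (g ℓ : ℕ) (hg : g ≠ 0) (hℓ1 : 1 ≤ ℓ) (hℓ2 : ℓ < g) :
    ∑ k ∈ Finset.Ico 1 g,
        ((Complex.exp (2*π*I/g))^k + 1)/((Complex.exp (2*π*I/g))^k - 1)
          * (Complex.exp (2*π*I/g))^(k*ℓ)
      = (g : ℂ) - 2*ℓ := by
  set q : ℂ := Complex.exp (2*π*I/g) with hqdef
  have hq := Complex.isPrimitiveRoot_exp g hg
  have hq0 : q ≠ 0 := Complex.exp_ne_zero _
  have hne1 : ∀ k ∈ Finset.Ico 1 g, q^k ≠ 1 := by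
    intro k hk
    rw [Finset.mem_Ico] at hk
    exact hq.pow_ne_one_of_pos_of_lt (by omega) hk.2
  -- partial geometric sums over k
  have hpos : 0 < g := Nat.pos_of_ne_zero hg
  have hico : ∀ s : ℕ, ∑ k ∈ Finset.Ico 1 g, (q^k)^s
      = (if g ∣ s then (g:ℂ) else 0) - 1 := by
    intro s
    have h0 : ∑ k ∈ Finset.range g, q^(s*k)
        = q^(s*0) + ∑ k ∈ Finset.Ico 1 g, q^(s*k) := by
      rw [Finset.range_eq_Ico, Finset.sum_eq_sum_Ico_succ_bot hpos]
    have h1 := aux_root_sum g hg s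
    rw [h0] at h1
    have h2 : ∀ k ∈ Finset.Ico 1 g, q^(s*k) = (q^k)^s := by
      intro k _; rw [← pow_mul, mul_comm]
    rw [Finset.sum_congr rfl h2] at h1
    rw [mul_zero, pow_zero] at h1
    linear_combination h1
  have hpart : ∀ n : ℕ, 1 ≤ n → n ≤ g → ∑ k ∈ Finset.Ico 1 g, (∑ s ∈ Finset.range n, (q^k)^s)
      = (g : ℂ) - n := by
    intro n hn1 hn
    rw [Finset.sum_comm]
    have hinner : ∀ s ∈ Finset.range n, ∑ k ∈ Finset.Ico 1 g, (q^k)^s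
        = (if s = 0 then (g:ℂ) else 0) - 1 := by
      intro s hs
      rw [Finset.mem_range] at hs
      rw [hico s]
      congr 1
      by_cases h : s = 0
      · simp [h]
      · have : ¬ g ∣ s := fun hd =>
          absurd (Nat.le_of_dvd (Nat.pos_of_ne_zero h) hd) (by omega)
        simp [h, this]
    rw [Finset.sum_congr rfl hinner, Finset.sum_sub_distrib, Finset.sum_ite_eq',
      Finset.sum_const, Finset.card_range]
    have : (0:ℕ) ∈ Finset.range n := Finset.mem_range.2 (by omega)
    rw [if_pos this, nsmul_eq_mul, mul_one]
  have hterm : ∀ k ∈ Finset.Ico 1 g,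
      (q^k + 1)/(q^k - 1) * q^(k*ℓ)
        = (∑ s ∈ Finset.range (ℓ+1), (q^k)^s) + (∑ s ∈ Finset.range ℓ, (q^k)^s)
            + 2 * (1/(q^k - 1)) := by
    intro k hk
    have := aux_term (q^k) (hne1 k hk) ℓ
    rw [← pow_mul] at this
    rw [this]
    ring
  rw [Finset.sum_congr rfl hterm]
  rw [Finset.sum_add_distrib, Finset.sum_add_distrib, ← Finset.mul_sum]
  rw [hpart (ℓ+1) (by omega) (by omega), hpart ℓ hℓ1 (by omega), aux_inv_sum g hg]
  push_cast
  ring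

lemma aux_cot (g k : ℕ) (hg : g ≠ 0) (hk1 : 1 ≤ k) (hk2 : k < g) :
    (Real.cot (k*π/g) : ℂ)
      = I * (((Complex.exp (2*π*I/g))^k + 1)/((Complex.exp (2*π*I/g))^k - 1)) := by
  set q : ℂ := Complex.exp (2*π*I/g) with hqdef
  have hq := Complex.isPrimitiveRoot_exp g hg
  have hne1 : q^k ≠ 1 := hq.pow_ne_one_of_pos_of_lt (by omega) hk2
  have hgne : (g : ℂ) ≠ 0 := Nat.cast_ne_zero.2 hg
  set z : ℂ := ((k : ℂ) * π / g) with hzdef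
  have hz : ((k * π / g : ℝ) : ℂ) = z := by push_cast; ring
  have hu : Complex.exp (z * I) ^ 2 = q^k := by
    rw [hqdef, ← Complex.exp_nat_mul, ← Complex.exp_nat_mul]
    congr 1
    push_cast
    ring
  rw [Complex.ofReal_cot, hz, Complex.cot_eq_cos_div_sin, Complex.sin, Complex.cos]
  set u : ℂ := Complex.exp (z * I) with hudef
  have hu0 : u ≠ 0 := Complex.exp_ne_zero _
  have hne : u^2 - 1 ≠ 0 := sub_ne_zero.2 (by rw [hu]; exact hne1)
  have hexp_neg : Complex.exp (-z * I) = u⁻¹ := by rw [neg_mul, Complex.exp_neg]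
  rw [hexp_neg, ← hu]
  have h3 : u⁻¹ - u = (1 - u^2)/u := by
    field_simp
  have h4 : (1 : ℂ) - u^2 ≠ 0 := fun h => hne (by linear_combination -h)
  rw [h3]
  field_simp
  linear_combination (u^4 - 1) * Complex.I_sq


lemma aux_mod (g a : ℕ) (hg : 0 < g) (h1 : a < 2*g) : a % g = if a < g then a else a - g := by
  split
  · exact Nat.mod_eq_of_lt ‹_›
  · next h =>
    push_neg at h
    rw [Nat.mod_eq_sub_mod h]
    exact Nat.mod_eq_of_lt (by omega)

lemma aux_mod1 (g a k : ℕ) (hg : 0 < g) (ha : a < g) (hk1 : 1 ≤ k) (hk : k < g) :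
    (a + k) % g ≠ a := by
  rw [aux_mod g _ hg (by omega)]
  split <;> omega

lemma aux_mod2 (g a b : ℕ) (hg : 0 < g) (ha : a < g) (hb : b < g) (hab : b ≠ a) :
    1 ≤ (b + g - a) % g ∧ (b + g - a) % g < g := by
  rw [aux_mod g _ hg (by omega)]
  split <;> omega

lemma aux_mod3 (g a k : ℕ) (hg : 0 < g) (ha : a < g) (hk1 : 1 ≤ k) (hk : k < g) :
    ((a + k) % g + g - a) % g = k := by
  rw [aux_mod g (a+k) hg (by omega), aux_mod g _ hg (by split <;> omega)]
  split <;> split <;> omega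

lemma aux_mod4 (g a b : ℕ) (hg : 0 < g) (ha : a < g) (hb : b < g) (hab : b ≠ a) :
    (a + (b + g - a) % g) % g = b := by
  rw [aux_mod g (b+g-a) hg (by omega), aux_mod g _ hg (by split <;> omega)]
  split <;> split <;> omega


theorem cartan_even_at_most_two_multiplicities (c : ℝ) (hc : 0 < c)
    (g : ℕ) (hg : 1 ≤ g) (hge : Even g)
    (θ₁ : ℝ) (hθ₁ : 0 < θ₁) (hθ₁' : θ₁ < π / g)
    (θ lam : Fin g → ℝ)
    (hθ : ∀ i : Fin g, θ i = θ₁ + (i : ℕ) * (π / g))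
    (hlam : ∀ i, lam i = Real.sqrt c * Real.cot (θ i))
    (hdist : Function.Injective lam)
    (m : Fin g → ℕ) (hm : ∀ i, 0 < m i)
    (hcartan : ∀ i : Fin g,
      ∑ j ∈ Finset.univ.erase i, (m j : ℝ) * (c + lam i * lam j) / (lam i - lam j) = 0) :
    ∃ a b : ℕ, ∀ i, m i = a ∨ m i = b := by
  have hgpos : 0 < g := hg
  have hgne : g ≠ 0 := hgpos.ne'
  have hgR : (g : ℝ) ≠ 0 := Nat.cast_ne_zero.2 hgne
  have hπg : 0 < π / g := div_pos Real.pi_pos (by exact_mod_cast hgpos)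
  -- the multiplicity sequence, extended periodically
  set N : ℕ → ℕ := fun n => m ⟨n % g, Nat.mod_lt n hgpos⟩ with hNdef
  have hNmod : ∀ n, N n = N (n % g) := by
    intro n
    simp only [hNdef]
    congr 1
    exact Fin.ext (by simp [Nat.mod_mod_of_dvd n (dvd_refl g)])
  have hNper : ∀ n, N (n + g) = N n := by
    intro n
    simp only [hNdef]
    congr 1
    exact Fin.ext (by simp [Nat.add_mod_right])
  have hNi : ∀ i : Fin g, m i = N i.val := by
    intro i
    simp only [hNdef]
    congr 1
    exact Fin.ext (by simp [Nat.mod_eq_of_lt i.isLt])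
  -- range of the angles
  have hθrange : ∀ i : Fin g, 0 < θ i ∧ θ i < π := by
    intro i
    constructor
    · rw [hθ i]
      have : 0 ≤ (i : ℕ) * (π / g) := by positivity
      linarith
    · rw [hθ i]
      have h1 : ((i : ℕ) : ℝ) + 1 ≤ g := by exact_mod_cast i.isLt
      have h2 : θ₁ + (i : ℕ) * (π / g) < (((i : ℕ) : ℝ) + 1) * (π / g) := by
        rw [add_mul, one_mul]
        linarith
      have h3 : (((i : ℕ) : ℝ) + 1) * (π / g) ≤ g * (π / g) :=
        mul_le_mul_of_nonneg_right h1 hπg.le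
      rw [mul_div_cancel₀ _ hgR] at h3
      linarith
  have hsinθ : ∀ i : Fin g, Real.sin (θ i) ≠ 0 := fun i =>
    (Real.sin_pos_of_pos_of_lt_pi (hθrange i).1 (hθrange i).2).ne'
  have hsink : ∀ k : ℕ, 1 ≤ k → k < g → Real.sin (k * π / g) ≠ 0 := by
    intro k hk1 hk2
    apply (Real.sin_pos_of_pos_of_lt_pi _ _).ne'
    · have : (0:ℝ) < k := by exact_mod_cast hk1
      rw [mul_div_assoc]
      positivity
    · have h1 : (k : ℝ) ≤ (g : ℝ) - 1 := by
        have : (k : ℝ) + 1 ≤ g := by exact_mod_cast hk2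
        linarith
      have h2 : (k : ℝ) * (π/g) ≤ ((g:ℝ) - 1) * (π/g) := mul_le_mul_of_nonneg_right h1 hπg.le
      have h3 : ((g:ℝ) - 1) * (π/g) < g * (π/g) := by
        apply mul_lt_mul_of_pos_right _ hπg
        linarith
      rw [mul_div_cancel₀ _ hgR] at h3
      rw [mul_div_assoc]
      linarith
  -- difference of angles
  have hθdiff : ∀ i j : Fin g, θ i - θ j = (((i:ℕ):ℝ) - ((j:ℕ):ℝ)) * (π / g) := by
    intro i j
    rw [hθ i, hθ j]
    ring
  have hsindiff : ∀ i j : Fin g, i ≠ j → Real.sin (θ i - θ j) ≠ 0 := by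
    intro i j hij
    rw [hθdiff]
    rcases lt_or_gt_of_ne (fun h : (i:ℕ) = (j:ℕ) => hij (Fin.ext h)) with h | h
    · set k : ℕ := (j:ℕ) - (i:ℕ) with hk
      have hkk : (((i:ℕ):ℝ) - ((j:ℕ):ℝ)) = -(k:ℝ) := by
        rw [hk]
        push_cast [Nat.cast_sub h.le]
        ring
      rw [hkk, neg_mul, Real.sin_neg, neg_ne_zero, ← mul_div_assoc]
      exact hsink k (by omega) (by omega)
    · set k : ℕ := (i:ℕ) - (j:ℕ) with hk
      have hkk : (((i:ℕ):ℝ) - ((j:ℕ):ℝ)) = (k:ℝ) := by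
        rw [hk]
        push_cast [Nat.cast_sub h.le]
        ring
      rw [hkk, ← mul_div_assoc]
      exact hsink k (by omega) (by omega)
  -- Cartan identities in cotangent form
  have hC : ∀ i : Fin g, ∑ j ∈ Finset.univ.erase i, (m j : ℝ) * Real.cot (θ i - θ j) = 0 := by
    intro i
    have hca := hcartan i
    have hterm : ∀ j ∈ Finset.univ.erase i, (m j : ℝ) * (c + lam i * lam j) / (lam i - lam j)
        = -Real.sqrt c * ((m j : ℝ) * Real.cot (θ i - θ j)) := by
      intro j hj
      have hij : j ≠ i := Finset.ne_of_mem_erase hj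
      rw [mul_div_assoc, hlam i, hlam j,
        aux_ratio c hc (θ i) (θ j) (hsinθ i) (hsinθ j) (hsindiff i j hij.symm)]
      ring
    rw [Finset.sum_congr rfl hterm, ← Finset.mul_sum] at hca
    rcases mul_eq_zero.1 hca with h | h
    · exfalso
      have := Real.sqrt_pos.2 hc
      rw [neg_eq_zero] at h
      linarith
    · exact h
  -- convolution form
  have hconv : ∀ i : Fin g,
      ∑ k ∈ Finset.Ico 1 g, Real.cot (k * π / g) * (N (i.val + k) : ℝ) = 0 := by
    intro i
    have h0 := hC i
    have key : ∑ k ∈ Finset.Ico 1 g, -(Real.cot (k * π / g) * (N (i.val + k) : ℝ))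
        = ∑ j ∈ Finset.univ.erase i, (m j : ℝ) * Real.cot (θ i - θ j) := by
      apply Finset.sum_nbij' (i := fun k => (⟨(i.val + k) % g, Nat.mod_lt _ hgpos⟩ : Fin g))
        (j := fun j => (j.val + g - i.val) % g)
      · intro k hk
        rw [Finset.mem_Ico] at hk
        rw [Finset.mem_erase]
        exact ⟨fun h => aux_mod1 g i.val k hgpos i.isLt hk.1 hk.2 (congrArg Fin.val h),
          Finset.mem_univ _⟩
      · intro j hj
        rw [Finset.mem_erase] at hj
        rw [Finset.mem_Ico]
        have := aux_mod2 g i.val j.val hgpos i.isLt j.isLt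
          (fun h => hj.1 (Fin.ext h))
        exact ⟨this.1, this.2⟩
      · intro k hk
        rw [Finset.mem_Ico] at hk
        exact aux_mod3 g i.val k hgpos i.isLt hk.1 hk.2
      · intro j hj
        rw [Finset.mem_erase] at hj
        exact Fin.ext (aux_mod4 g i.val j.val hgpos i.isLt j.isLt
          (fun h => hj.1 (Fin.ext h)))
      · intro k hk
        rw [Finset.mem_Ico] at hk
        set j : Fin g := ⟨(i.val + k) % g, Nat.mod_lt _ hgpos⟩ with hjdef
        have hmj : (m j : ℝ) = (N (i.val + k) : ℝ) := by
          rw [hNdef]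
        set t : ℕ := (i.val + k) / g with htdef
        have hjv : ((j.val : ℕ) : ℝ) = (i.val : ℝ) + k - g * t := by
          have hdm := Nat.div_add_mod (i.val + k) g
          have : (g * t + j.val : ℕ) = i.val + k := hdm
          have := congrArg (fun x : ℕ => (x : ℝ)) this
          push_cast at this
          linarith
        have hang : θ i - θ j = -(k * π / g) + (t : ℤ) * π := by
          rw [hθdiff i j, hjv]
          push_cast
          field_simp
          ring
        rw [hang, aux_cot_period, aux_cot_neg, hmj]
        ring
    have h2 := key.trans h0
    rw [Finset.sum_neg_distrib, neg_eq_zero] at h2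
    exact h2
  -- complex setup
  set q : ℂ := Complex.exp (2 * π * I / g) with hqdef
  have hqprim := Complex.isPrimitiveRoot_exp g hgne
  have hq0 : q ≠ 0 := Complex.exp_ne_zero _
  have hqg : q ^ g = 1 := hqprim.pow_eq_one
  -- shift invariance of periodic sums
  have hshift1 : ∀ (f : ℕ → ℂ), (∀ n, f (n + g) = f n) →
      ∑ i ∈ Finset.range g, f (i + 1) = ∑ i ∈ Finset.range g, f i := by
    intro f hf
    have e1 := Finset.sum_range_succ' f g
    have e2 := Finset.sum_range_succ f g
    have hf0 : f g = f 0 := by simpa using hf 0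
    linear_combination e2 - e1 + hf0
  have hshift : ∀ (k : ℕ) (f : ℕ → ℂ), (∀ n, f (n + g) = f n) →
      ∑ i ∈ Finset.range g, f (i + k) = ∑ i ∈ Finset.range g, f i := by
    intro k
    induction k with
    | zero => intro f _; simp
    | succ k ih =>
      intro f hf
      have h1 : ∑ i ∈ Finset.range g, f (i + (k+1))
          = ∑ i ∈ Finset.range g, (fun n => f (n + 1)) (i + k) := rfl
      rw [h1, ih (fun n => f (n + 1)) (fun n => by simpa [Nat.add_right_comm] using hf (n+1))]
      exact hshift1 f hf
  -- Fourier coefficients vanish away from 0 and g/2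
  have hqper : ∀ ℓ n : ℕ, q ^ (ℓ * (n + g)) = q ^ (ℓ * n) := by
    intro ℓ n
    rw [Nat.mul_add, pow_add, mul_comm ℓ g, pow_mul q g ℓ, hqg, one_pow, mul_one]
  have hqone : ∀ ℓ : ℕ, q ^ (ℓ * g) = 1 := by
    intro ℓ
    rw [mul_comm ℓ g, pow_mul q g ℓ, hqg, one_pow]
  have hfour : ∀ ℓ : ℕ, 1 ≤ ℓ → ℓ < g → 2*ℓ ≠ g →
      ∑ n ∈ Finset.range g, q ^ (ℓ * n) * (N n : ℂ) = 0 := by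
    intro ℓ hℓ1 hℓ2 hℓg
    set S : ℂ := ∑ n ∈ Finset.range g, q ^ (ℓ * n) * (N n : ℂ) with hSdef
    have hpoint : ∀ k ∈ Finset.Ico 1 g,
        ∑ n ∈ Finset.range g, q ^ (ℓ * n) * (N (n + k) : ℂ) = q ^ (ℓ * (g - k)) * S := by
      intro k hk
      rw [Finset.mem_Ico] at hk
      have hq1 : q ^ (ℓ * (g - k)) * q ^ (ℓ * k) = 1 := by
        rw [← pow_add, ← Nat.mul_add, Nat.sub_add_cancel hk.2.le, hqone]
      have hsh : ∑ n ∈ Finset.range g, (fun n => q ^ (ℓ * n) * (N n : ℂ)) (n + k)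
          = ∑ n ∈ Finset.range g, q ^ (ℓ * n) * (N n : ℂ) :=
        hshift k (fun n => q ^ (ℓ * n) * (N n : ℂ)) (fun n => by
          show q ^ (ℓ*(n+g)) * (N (n+g) : ℂ) = q ^ (ℓ*n) * (N n : ℂ)
          rw [hqper ℓ n, hNper n])
      have hEq : q ^ (ℓ*k) * ∑ n ∈ Finset.range g, q ^ (ℓ * n) * (N (n + k) : ℂ) = S := by
        rw [Finset.mul_sum]
        rw [hSdef, ← hsh]
        apply Finset.sum_congr rfl
        intro n _
        show q ^ (ℓ*k) * (q ^ (ℓ*n) * (N (n+k) : ℂ)) = q ^ (ℓ*(n+k)) * (N (n+k) : ℂ)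
        rw [← mul_assoc, ← pow_add, ← Nat.mul_add]
        congr 3
        omega
      rw [eq_comm, ← hEq, ← mul_assoc, hq1, one_mul]
    have h0 : ∑ n ∈ Finset.range g,
        ∑ k ∈ Finset.Ico 1 g, (Real.cot (k*π/g) : ℂ) * (q ^ (ℓ * n) * (N (n+k) : ℂ)) = 0 := by
      apply Finset.sum_eq_zero
      intro n hn
      have hcv := hconv ⟨n, Finset.mem_range.1 hn⟩
      have hcast : ∑ k ∈ Finset.Ico 1 g, (Real.cot (k*π/g) : ℂ) * (N (n+k) : ℂ)
          = ((∑ k ∈ Finset.Ico 1 g, Real.cot (k*π/g) * (N (n+k) : ℝ) : ℝ) : ℂ) := by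
        push_cast
        rfl
      have hz : ∑ k ∈ Finset.Ico 1 g, (Real.cot (k*π/g) : ℂ) * (N (n+k) : ℂ) = 0 := by
        rw [hcast]
        rw [show ∑ k ∈ Finset.Ico 1 g, Real.cot (k*π/g) * (N (n+k) : ℝ) = 0 from hcv]
        exact Complex.ofReal_zero
      calc ∑ k ∈ Finset.Ico 1 g, (Real.cot (k*π/g) : ℂ) * (q ^ (ℓ * n) * (N (n+k) : ℂ))
          = q ^ (ℓ * n) * ∑ k ∈ Finset.Ico 1 g, (Real.cot (k*π/g) : ℂ) * (N (n+k) : ℂ) := by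
            rw [Finset.mul_sum]
            apply Finset.sum_congr rfl
            intro k _
            ring
        _ = 0 := by rw [hz, mul_zero]
    rw [Finset.sum_comm] at h0
    have h1 : ∑ k ∈ Finset.Ico 1 g, (Real.cot (k*π/g) : ℂ) * (q ^ (ℓ * (g - k)) * S) = 0 := by
      rw [← h0]
      apply Finset.sum_congr rfl
      intro k hk
      rw [← hpoint k hk, Finset.mul_sum]
    have h2 : (∑ k ∈ Finset.Ico 1 g, (Real.cot (k*π/g) : ℂ) * q ^ (ℓ * (g - k))) * S = 0 := by
      rw [Finset.sum_mul, ← h1]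
      apply Finset.sum_congr rfl
      intro k _
      ring
    have hB : ∑ k ∈ Finset.Ico 1 g, (Real.cot (k*π/g) : ℂ) * q ^ (ℓ * (g - k))
        = -(I * ((g:ℂ) - 2*ℓ)) := by
      have hrev : ∑ k ∈ Finset.Ico 1 g, (Real.cot (k*π/g) : ℂ) * q ^ (ℓ * (g - k))
          = ∑ k ∈ Finset.Ico 1 g, (Real.cot (((g-k : ℕ))*π/g) : ℂ) * q ^ (ℓ * k) := by
        apply Finset.sum_nbij' (i := fun k => g - k) (j := fun k => g - k)
        · intro k hk; rw [Finset.mem_Ico] at *; omega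
        · intro k hk; rw [Finset.mem_Ico] at *; omega
        · intro k hk; rw [Finset.mem_Ico] at hk; show g - (g - k) = k; omega
        · intro k hk; rw [Finset.mem_Ico] at hk; show g - (g - k) = k; omega
        · intro k hk
          rw [Finset.mem_Ico] at hk
          have e1 : g - (g - k) = k := by omega
          show (Real.cot ((k:ℕ)*π/g) : ℂ) * q ^ (ℓ * (g - k))
              = (Real.cot (((g - (g-k) : ℕ))*π/g) : ℂ) * q ^ (ℓ * (g - k))
          rw [e1]
      rw [hrev]
      have hterm : ∀ k ∈ Finset.Ico 1 g,
          (Real.cot (((g-k : ℕ))*π/g) : ℂ) * q ^ (ℓ * k)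
            = -(I * ((q^k + 1)/(q^k - 1) * q ^ (k * ℓ))) := by
        intro k hk
        rw [Finset.mem_Ico] at hk
        have e2 : ((g-k : ℕ) : ℝ) * π / g = π - k*π/g := by
          rw [Nat.cast_sub hk.2.le]
          field_simp
        rw [e2, aux_cot_pi_sub, Complex.ofReal_neg, aux_cot g k hgne hk.1 hk.2]
        rw [mul_comm ℓ k]
        ring
      rw [Finset.sum_congr rfl hterm, Finset.sum_neg_distrib]
      congr 1
      rw [← Finset.mul_sum, aux_key g ℓ hgne hℓ1 hℓ2]
    rw [hB] at h2
    rcases mul_eq_zero.1 h2 with h | h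
    · exfalso
      rw [neg_eq_zero] at h
      rcases mul_eq_zero.1 h with h' | h'
      · exact Complex.I_ne_zero h'
      · rw [sub_eq_zero] at h'
        apply hℓg
        exact_mod_cast h'.symm
    · exact h
  -- the difference sequence has vanishing Fourier transform
  have hD : ∀ ℓ : ℕ, ℓ < g →
      ∑ n ∈ Finset.range g, q ^ (ℓ * n) * ((N n : ℂ) - (N (n+2) : ℂ)) = 0 := by
    intro ℓ hℓ
    set S : ℂ := ∑ n ∈ Finset.range g, q ^ (ℓ * n) * (N n : ℂ) with hSdef
    set T : ℂ := ∑ n ∈ Finset.range g, q ^ (ℓ * n) * (N (n+2) : ℂ) with hTdef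
    have hT : q ^ (ℓ*2) * T = S := by
      rw [hTdef, Finset.mul_sum]
      have e1 : ∑ n ∈ Finset.range g, q ^ (ℓ*2) * (q ^ (ℓ*n) * (N (n+2) : ℂ))
          = ∑ n ∈ Finset.range g, (fun n => q ^ (ℓ*n) * (N n : ℂ)) (n + 2) := by
        apply Finset.sum_congr rfl
        intro n _
        show q ^ (ℓ*2) * (q ^ (ℓ*n) * (N (n+2) : ℂ)) = q ^ (ℓ*(n+2)) * (N (n+2) : ℂ)
        rw [← mul_assoc, ← pow_add, ← Nat.mul_add]
        congr 3
        omega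
      rw [e1, hshift 2 (fun n => q ^ (ℓ*n) * (N n : ℂ)) (fun n => by
        show q ^ (ℓ*(n+g)) * (N (n+g) : ℂ) = q ^ (ℓ*n) * (N n : ℂ)
        rw [hqper ℓ n, hNper n])]
    have hsplit : ∑ n ∈ Finset.range g, q ^ (ℓ * n) * ((N n : ℂ) - (N (n+2) : ℂ))
        = S - T := by
      rw [hSdef, hTdef, ← Finset.sum_sub_distrib]
      apply Finset.sum_congr rfl
      intro n _
      ring
    rw [hsplit]
    by_cases hcase : ℓ = 0 ∨ 2*ℓ = g
    · have hq2 : q ^ (ℓ*2) = 1 := by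
        rcases hcase with h | h
        · rw [h]; norm_num
        · rw [show ℓ*2 = g by omega, hqg]
      rw [hq2, one_mul] at hT
      rw [hT, sub_self]
    · push_neg at hcase
      have hS0 : S = 0 := hfour ℓ (by omega) hℓ hcase.2
      have hT0 : T = 0 := by
        have := hT
        rw [hS0] at this
        rcases mul_eq_zero.1 this with h | h
        · exact absurd h (pow_ne_zero _ hq0)
        · exact h
      rw [hS0, hT0, sub_zero]
  -- inversion: N (j+2) = N j
  have hstep0 : ∀ j, j < g → N j = N (j + 2) := by
    intro j hj
    have hsum0 : ∑ ℓ ∈ Finset.range g,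
        q ^ (ℓ * (g - j)) * (∑ n ∈ Finset.range g, q ^ (ℓ * n) * ((N n : ℂ) - (N (n+2) : ℂ))) = 0 := by
      apply Finset.sum_eq_zero
      intro ℓ hℓ
      rw [hD ℓ (Finset.mem_range.1 hℓ), mul_zero]
    have hswap : ∑ ℓ ∈ Finset.range g, q ^ (ℓ * (g - j))
          * (∑ n ∈ Finset.range g, q ^ (ℓ * n) * ((N n : ℂ) - (N (n+2) : ℂ)))
        = ∑ n ∈ Finset.range g, ((N n : ℂ) - (N (n+2) : ℂ))
          * (∑ ℓ ∈ Finset.range g, q ^ (((g - j) + n) * ℓ)) := by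
      have e1 : ∀ ℓ : ℕ, q ^ (ℓ * (g - j))
            * (∑ n ∈ Finset.range g, q ^ (ℓ * n) * ((N n : ℂ) - (N (n+2) : ℂ)))
          = ∑ n ∈ Finset.range g, q ^ (((g - j) + n) * ℓ) * ((N n : ℂ) - (N (n+2) : ℂ)) := by
        intro ℓ
        rw [Finset.mul_sum]
        apply Finset.sum_congr rfl
        intro n _
        rw [← mul_assoc, ← pow_add]
        congr 2
        ring
      calc ∑ ℓ ∈ Finset.range g, q ^ (ℓ * (g - j))
            * (∑ n ∈ Finset.range g, q ^ (ℓ * n) * ((N n : ℂ) - (N (n+2) : ℂ)))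
          = ∑ ℓ ∈ Finset.range g, ∑ n ∈ Finset.range g,
              q ^ (((g - j) + n) * ℓ) * ((N n : ℂ) - (N (n+2) : ℂ)) :=
            Finset.sum_congr rfl (fun ℓ _ => e1 ℓ)
        _ = ∑ n ∈ Finset.range g, ∑ ℓ ∈ Finset.range g,
              q ^ (((g - j) + n) * ℓ) * ((N n : ℂ) - (N (n+2) : ℂ)) := Finset.sum_comm
        _ = ∑ n ∈ Finset.range g, ((N n : ℂ) - (N (n+2) : ℂ))
              * (∑ ℓ ∈ Finset.range g, q ^ (((g - j) + n) * ℓ)) := by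
            apply Finset.sum_congr rfl
            intro n _
            rw [← Finset.sum_mul, mul_comm]
    rw [hswap] at hsum0
    have hroot : ∀ n ∈ Finset.range g,
        ((N n : ℂ) - (N (n+2) : ℂ)) * (∑ ℓ ∈ Finset.range g, q ^ (((g - j) + n) * ℓ))
          = if n = j then ((N n : ℂ) - (N (n+2) : ℂ)) * g else 0 := by
      intro n hn
      rw [Finset.mem_range] at hn
      rw [aux_root_sum g hgne ((g - j) + n)]
      have hiff : (g ∣ (g - j) + n) ↔ n = j := by
        constructor
        · rintro ⟨t, ht⟩
          have h2 : t ≤ 1 := by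
            by_contra hcon
            push_neg at hcon
            have : g * 2 ≤ g * t := Nat.mul_le_mul_left g hcon
            omega
          interval_cases t <;> omega
        · intro h
          exact ⟨1, by omega⟩
      by_cases h : n = j
      · rw [if_pos ((hiff).2 h), if_pos h]
      · rw [if_neg (fun hd => h (hiff.1 hd)), if_neg h, mul_zero]
    rw [Finset.sum_congr rfl hroot, Finset.sum_ite_eq' (Finset.range g) j
      (fun n => ((N n : ℂ) - (N (n+2) : ℂ)) * g), if_pos (Finset.mem_range.2 hj)] at hsum0
    have hgC : (g : ℂ) ≠ 0 := Nat.cast_ne_zero.2 hgne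
    rcases mul_eq_zero.1 hsum0 with h | h
    · have : (N j : ℂ) = (N (j+2) : ℂ) := by linear_combination h
      exact_mod_cast this
    · exact absurd h hgC
  have hNperk : ∀ t k, N (k + g * t) = N k := by
    intro t
    induction t with
    | zero => intro k; simp
    | succ t ih =>
      intro k
      have : k + g * (t+1) = (k + g * t) + g := by ring
      rw [this, hNper, ih]
  have hstep : ∀ n, N (n + 2) = N n := by
    intro n
    have h1 : n + 2 = (n % g + 2) + g * (n / g) := by
      have := Nat.div_add_mod n g
      omega
    rw [h1, hNperk, ← hstep0 (n % g) (Nat.mod_lt n hgpos), ← hNmod]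
  -- conclusion
  have hpar : ∀ n, N n = N (n % 2) := by
    intro n
    induction n using Nat.strong_induction_on with
    | _ n ih =>
      match n with
      | 0 => rfl
      | 1 => rfl
      | (n+2) =>
        rw [hstep n, ih n (by omega)]
        congr 1
        omega
  refine ⟨N 0, N 1, fun i => ?_⟩
  rw [hNi i, hpar i.val]
  rcases Nat.mod_two_eq_zero_or_one i.val with h | h
  · left; rw [h]
  · right; rw [h]
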